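/- On ℝ⁴ with coordinates (x¹, x², y¹, y²), define the smooth 2-form ω₀ = e^{x¹y¹ + x²y²} dx¹ ∧ dx² + dy¹ ∧ dy² and the smooth 1-form β₀ = x¹ dy¹ + x² dy². Then: (i) dω₀ = β₀ ∧ ω₀; (ii) dβ₀ = dx¹ ∧ dy¹ + dx² ∧ dy², which is nonzero at every point; and (iii) dβ₀ ∧ ω₀ = 0 at every point. In particular, in dimension 4 the equation dω = β ∧ ω with ω nondegenerate does not force dβ = 0. -/

import Mathlib

set_option synthInstance.maxHeartbeats 1000000
set_option maxHeartbeats 1000000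

noncomputable section

open ExteriorAlgebra

/-! ### Preamble: differential forms on open subsets of `ℝⁿ`

A (inhomogeneous) differential form on (an open subset of) `ℝⁿ` is modelled as a map from
`ℝⁿ = Fin n → ℝ` into the exterior algebra `ExteriorAlgebra ℝ (Module.Dual ℝ (Fin n → ℝ))`
of the dual space; a differential `k`-form takes values in the `k`-th exterior power
`⋀[ℝ]^k (Module.Dual ℝ (Fin n → ℝ))`.  The wedge product is multiplication in the exterior
algebra.  To speak about continuity and differentiability we endow this (finite-dimensional)
exterior algebra with a norm, induced by a linear equivalence with `ℝ^d`; all norms on a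
finite-dimensional real vector space are equivalent, so the resulting notions of continuous
and smooth differential forms do not depend on this choice.  The exterior derivative is
defined by the classical coordinate formula `dω = ∑ᵢ dxⁱ ∧ ∂ᵢω`. -/

/-- The `i`-th exterior power of a finite-dimensional space vanishes for `i` larger
than the dimension. -/
theorem exteriorPower_eq_bot_of_finrank_lt {V : Type*} [AddCommGroup V] [Module ℝ V]
    [FiniteDimensional ℝ V] {i : ℕ} (hi : Module.finrank ℝ V < i) :
    ⋀[ℝ]^i V = ⊥ := by
  rw [← ιMulti_span_fixedDegree, Submodule.span_eq_bot]
  rintro x ⟨v, rfl⟩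
  refine AlternatingMap.map_linearDependent _ v (fun h => ?_)
  have := h.fintype_card_le_finrank
  simp only [Fintype.card_fin] at this
  omega

/-- The exterior algebra of a finite-dimensional real vector space is finite-dimensional. -/
instance instFiniteExteriorAlgebra {V : Type*} [AddCommGroup V] [Module ℝ V]
    [FiniteDimensional ℝ V] : Module.Finite ℝ (ExteriorAlgebra ℝ V) := by
  classical
  rw [Module.finite_def]
  set m := Module.finrank ℝ V
  have hfg : ∀ i : ℕ, (⋀[ℝ]^i V).FG := by
    intro i
    induction i with
    | zero =>
      rw [exteriorPower, pow_zero, Submodule.one_eq_span]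
      exact Submodule.fg_span_singleton _
    | succ j ih =>
      rw [exteriorPower, pow_succ]
      exact Submodule.FG.mul ih
        (by rw [← Submodule.map_top]; exact Submodule.FG.map _ Module.Finite.fg_top)
  set F : Submodule ℝ (ExteriorAlgebra ℝ V) := ∑ i ∈ Finset.range (m + 1), ⋀[ℝ]^i V with hF
  have hFfg : F.FG := by
    rw [hF]
    classical
    induction (Finset.range (m + 1)) using Finset.cons_induction with
    | empty => simpa using Submodule.fg_bot
    | cons a s ha ih =>
      rw [Finset.sum_cons, Submodule.add_eq_sup]
      exact Submodule.FG.sup (hfg a) ih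
  have hle : ∀ i : ℕ, ⋀[ℝ]^i V ≤ F := by
    intro i
    by_cases h : i ≤ m
    · exact Finset.single_le_sum (f := fun i => ⋀[ℝ]^i V) (fun j _ => bot_le)
        (Finset.mem_range.2 (by omega))
    · rw [exteriorPower_eq_bot_of_finrank_lt (by omega)]
      exact bot_le
  have htop : (⊤ : Submodule ℝ (ExteriorAlgebra ℝ V)) ≤ F := by
    intro x _
    rw [← DirectSum.sum_support_decompose (fun i : ℕ => ⋀[ℝ]^i V) x]
    exact Submodule.sum_mem _ fun i _ => hle i (DirectSum.decompose (fun i : ℕ => ⋀[ℝ]^i V) x i).2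
  exact top_le_iff.mp htop ▸ hFfg

/-- The algebra of (inhomogeneous) exterior forms on `ℝⁿ`: the exterior algebra of the
dual space of `ℝⁿ`.  A `k`-form on `ℝⁿ` is an element of the submodule
`⋀[ℝ]^k (Module.Dual ℝ (Fin n → ℝ))`. -/
abbrev FormAlgebra (n : ℕ) : Type := ExteriorAlgebra ℝ (Module.Dual ℝ (Fin n → ℝ))

/-- A norm on the (finite-dimensional) algebra of exterior forms on `ℝⁿ`, transported from
`ℝ^d` by a linear equivalence.  All norms on a finite-dimensional real space are equivalent,
so continuity/smoothness of form-valued maps does not depend on this choice. -/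
instance instNormedFormAlgebra (n : ℕ) : NormedAddCommGroup (FormAlgebra n) :=
  NormedAddCommGroup.induced _ _ ((Module.finBasis ℝ (FormAlgebra n)).equivFun.toLinearMap)
    (Module.finBasis ℝ (FormAlgebra n)).equivFun.injective

instance instNormedSpaceFormAlgebra (n : ℕ) : NormedSpace ℝ (FormAlgebra n) :=
  NormedSpace.induced ℝ _ _ ((Module.finBasis ℝ (FormAlgebra n)).equivFun.toLinearMap)

/-- The coordinate 1-forms `dxⁱ` on `ℝⁿ`. -/
def dx {n : ℕ} (i : Fin n) : FormAlgebra n := ExteriorAlgebra.ι ℝ (LinearMap.proj i)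

/-- The exterior derivative of a form-valued map on `ℝⁿ`, via the classical coordinate
formula `dω = ∑ᵢ dxⁱ ∧ ∂ᵢω` (where `∂ᵢ` is the partial derivative in the direction of the
`i`-th standard basis vector). -/
def extDeriv' {n : ℕ} (ω : (Fin n → ℝ) → FormAlgebra n) (x : Fin n → ℝ) : FormAlgebra n :=
  ∑ i : Fin n, dx i * fderiv ℝ ω x (Pi.single i 1)

end

/-- The 2-form `ω₀ = e^{x¹y¹ + x²y²} dx¹ ∧ dx² + dy¹ ∧ dy²` on `ℝ⁴`, with coordinates
`(x¹, x², y¹, y²) = (v 0, v 1, v 2, v 3)`. -/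
noncomputable def ω₀ : (Fin 4 → ℝ) → FormAlgebra 4 := fun v =>
  Real.exp (v 0 * v 2 + v 1 * v 3) • (dx 0 * dx 1) + dx 2 * dx 3

/-- The 1-form `β₀ = x¹ dy¹ + x² dy²` on `ℝ⁴`. -/
noncomputable def β₀ : (Fin 4 → ℝ) → FormAlgebra 4 := fun v =>
  v 0 • dx 2 + v 1 • dx 3

/-!
STATEMENT 16: on `ℝ⁴`, (i) `dω₀ = β₀ ∧ ω₀`; (ii) `dβ₀ = dx¹ ∧ dy¹ + dx² ∧ dy²`, which is
nonzero at every point; (iii) `dβ₀ ∧ ω₀ = 0` at every point; moreover `ω₀` is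
nondegenerate (`ω₀ ∧ ω₀ ≠ 0` everywhere).  In particular, in dimension 4 the equation
`dω = β ∧ ω` with `ω` nondegenerate does not force `dβ = 0`.
-/

noncomputable section
open ExteriorAlgebra

abbrev Dual4 := Module.Dual ℝ (Fin 4 → ℝ)

lemma dx_sq {n : ℕ} (i : Fin n) : dx i * dx i = 0 := ι_sq_zero _
lemma dx_anti {n : ℕ} (i j : Fin n) : dx i * dx j = -(dx j * dx i) :=
  eq_neg_of_add_eq_zero_left (ι_add_mul_swap _ _)

def p (i : Fin 4) : Dual4 := (Pi.basisFun ℝ (Fin 4)).dualBasis i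

lemma dx_eq (i : Fin 4) : dx i = ExteriorAlgebra.ι ℝ (p i) := by
  unfold dx p
  congr 1
  ext v
  simp [Module.Basis.coe_dualBasis, Module.Basis.coord_apply]

lemma prod4 (w : Fin 4 → Dual4) :
    ExteriorAlgebra.ι ℝ (w 0) * ExteriorAlgebra.ι ℝ (w 1) *
      (ExteriorAlgebra.ι ℝ (w 2) * ExteriorAlgebra.ι ℝ (w 3)) = ιMulti ℝ 4 w := by
  rw [ιMulti_apply]
  have h2 : (Fin.succ 2 : Fin 4) = 3 := rfl
  norm_num [List.ofFn_succ, mul_assoc, h2]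

lemma quad (a b c d : Fin 4) :
    dx a * dx b * (dx c * dx d) = ιMulti ℝ 4 ![p a, p b, p c, p d] := by
  rw [← prod4]
  simp [dx_eq]

lemma tau_ne_zero : dx 0 * dx 1 * (dx 2 * dx 3) ≠ (0 : FormAlgebra 4) := by
  set B := (Pi.basisFun ℝ (Fin 4)).dualBasis with hB
  have hι : dx 0 * dx 1 * (dx 2 * dx 3) = ιMulti ℝ 4 (⇑B) := by
    simp only [dx_eq]
    exact prod4 _
  set f : ∀ i : ℕ, Dual4 [⋀^Fin i]→ₗ[ℝ] ℝ :=
    fun i => if h : i = 4 then h.symm ▸ B.det else 0 with hf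
  intro h
  have h2 : liftAlternating f (ιMulti ℝ 4 ⇑B) = 1 := by
    rw [liftAlternating_apply_ιMulti]
    show f 4 ⇑B = 1
    simp [hf, Module.Basis.det_self]
  rw [← hι, h, map_zero] at h2
  exact one_ne_zero h2.symm

lemma T1 {n : ℕ} (i j : Fin n) : dx i * (dx i * dx j) = 0 := by
  rw [← mul_assoc, dx_sq, zero_mul]

lemma T2 {n : ℕ} (i j : Fin n) : dx j * (dx i * dx j) = 0 := by
  rw [← mul_assoc, dx_anti j i, neg_mul, mul_assoc, dx_sq, mul_zero, neg_zero]

lemma Rpair (a b c d : Fin 4) :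
    dx c * dx d * (dx a * dx b) = dx a * dx b * (dx c * dx d) := by
  rw [quad, quad]
  have hfun : (![p c, p d, p a, p b] : Fin 4 → Dual4)
      = ![p a, p b, p c, p d] ∘ (Equiv.swap 0 2 * Equiv.swap 1 3 : Equiv.Perm (Fin 4)) := by
    funext i
    fin_cases i <;> simp [Equiv.swap_apply_def]
  rw [hfun, AlternatingMap.map_perm]
  have hs : Equiv.Perm.sign (Equiv.swap 0 2 * Equiv.swap 1 3 : Equiv.Perm (Fin 4)) = 1 := by
    decide
  rw [hs, one_smul]

lemma Rswap12 (a b c d : Fin 4) :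
    dx a * dx c * (dx b * dx d) = -(dx a * dx b * (dx c * dx d)) := by
  rw [quad, quad]
  have hfun : (![p a, p c, p b, p d] : Fin 4 → Dual4)
      = ![p a, p b, p c, p d] ∘ (Equiv.swap 1 2 : Equiv.Perm (Fin 4)) := by
    funext i
    fin_cases i <;> simp [Equiv.swap_apply_def]
  rw [hfun, AlternatingMap.map_perm]
  have hs : Equiv.Perm.sign (Equiv.swap 1 2 : Equiv.Perm (Fin 4)) = -1 := by decide
  rw [hs]
  simp

lemma quad_rep1 (a b d : Fin 4) : dx a * dx b * (dx a * dx d) = 0 := by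
  rw [quad]
  exact (ιMulti ℝ 4).map_eq_zero_of_eq _
    (show (![p a, p b, p a, p d] : Fin 4 → Dual4) 0 = ![p a, p b, p a, p d] 2 from rfl)
    (by decide)

lemma quad_rep2 (a b d : Fin 4) : dx a * dx b * (dx b * dx d) = 0 := by
  rw [quad]
  exact (ιMulti ℝ 4).map_eq_zero_of_eq _
    (show (![p a, p b, p b, p d] : Fin 4 → Dual4) 1 = ![p a, p b, p b, p d] 2 from rfl)
    (by decide)

lemma quad_rep3 (a b c : Fin 4) : dx a * dx b * (dx c * dx a) = 0 := by
  rw [quad]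
  exact (ιMulti ℝ 4).map_eq_zero_of_eq _
    (show (![p a, p b, p c, p a] : Fin 4 → Dual4) 0 = ![p a, p b, p c, p a] 3 from rfl)
    (by decide)

lemma quad_rep4 (a b c : Fin 4) : dx a * dx b * (dx c * dx b) = 0 := by
  rw [quad]
  exact (ιMulti ℝ 4).map_eq_zero_of_eq _
    (show (![p a, p b, p c, p b] : Fin 4 → Dual4) 1 = ![p a, p b, p c, p b] 3 from rfl)
    (by decide)

lemma hfd_β (x : Fin 4 → ℝ) :
    HasFDerivAt β₀
      ((ContinuousLinearMap.proj (R := ℝ) (φ := fun _ : Fin 4 => ℝ) 0).smulRight (dx 2)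
        + (ContinuousLinearMap.proj (R := ℝ) (φ := fun _ : Fin 4 => ℝ) 1).smulRight (dx 3)) x :=
  ((ContinuousLinearMap.proj (R := ℝ) (φ := fun _ : Fin 4 => ℝ) 0).hasFDerivAt.smul_const
      (dx 2)).add
    ((ContinuousLinearMap.proj (R := ℝ) (φ := fun _ : Fin 4 => ℝ) 1).hasFDerivAt.smul_const
      (dx 3))

lemma extDeriv_β (x : Fin 4 → ℝ) : extDeriv' β₀ x = dx 0 * dx 2 + dx 1 * dx 3 := by
  rw [extDeriv']
  rw [(hfd_β x).fderiv]
  rw [Fin.sum_univ_four]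
  simp [Pi.single_apply, mul_add]

lemma hfd_ω (x : Fin 4 → ℝ) :
    HasFDerivAt ω₀
      (((Real.exp (x 0 * x 2 + x 1 * x 3) •
          ((x 0 • (ContinuousLinearMap.proj (R := ℝ) (φ := fun _ : Fin 4 => ℝ) 2)
            + x 2 • (ContinuousLinearMap.proj (R := ℝ) (φ := fun _ : Fin 4 => ℝ) 0))
           + (x 1 • (ContinuousLinearMap.proj (R := ℝ) (φ := fun _ : Fin 4 => ℝ) 3)
            + x 3 • (ContinuousLinearMap.proj (R := ℝ) (φ := fun _ : Fin 4 => ℝ) 1)))).smulRight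
          (dx 0 * dx 1))) x := by
  have h1 : HasFDerivAt (fun v : Fin 4 → ℝ => v 0 * v 2 + v 1 * v 3)
      ((x 0 • (ContinuousLinearMap.proj (R := ℝ) (φ := fun _ : Fin 4 => ℝ) 2)
        + x 2 • (ContinuousLinearMap.proj (R := ℝ) (φ := fun _ : Fin 4 => ℝ) 0))
       + (x 1 • (ContinuousLinearMap.proj (R := ℝ) (φ := fun _ : Fin 4 => ℝ) 3)
        + x 3 • (ContinuousLinearMap.proj (R := ℝ) (φ := fun _ : Fin 4 => ℝ) 1))) x :=
    ((ContinuousLinearMap.proj (R := ℝ) (φ := fun _ : Fin 4 => ℝ) 0).hasFDerivAt.mul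
      (ContinuousLinearMap.proj (R := ℝ) (φ := fun _ : Fin 4 => ℝ) 2).hasFDerivAt).add
      ((ContinuousLinearMap.proj (R := ℝ) (φ := fun _ : Fin 4 => ℝ) 1).hasFDerivAt.mul
      (ContinuousLinearMap.proj (R := ℝ) (φ := fun _ : Fin 4 => ℝ) 3).hasFDerivAt)
  exact (h1.exp.smul_const (dx 0 * dx 1)).add_const (dx 2 * dx 3)

lemma extDeriv_ω (x : Fin 4 → ℝ) : extDeriv' ω₀ x = β₀ x * ω₀ x := by
  rw [extDeriv']
  rw [(hfd_ω x).fderiv]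
  rw [Fin.sum_univ_four]
  simp only [ContinuousLinearMap.smulRight_apply, ContinuousLinearMap.add_apply,
    ContinuousLinearMap.smul_apply, ContinuousLinearMap.proj_apply, Pi.single_apply,
    smul_eq_mul]
  simp (config := { decide := true })
  rw [β₀, ω₀]
  simp only [mul_smul_comm, smul_mul_assoc, mul_add, add_mul, smul_add, smul_smul,
    T1, T2, smul_zero]
  module

end

theorem statement16 :
    (∀ x : Fin 4 → ℝ, extDeriv' ω₀ x = β₀ x * ω₀ x) ∧
    (∀ x : Fin 4 → ℝ, extDeriv' β₀ x = dx 0 * dx 2 + dx 1 * dx 3) ∧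
    (∀ x : Fin 4 → ℝ, extDeriv' β₀ x ≠ 0) ∧
    (∀ x : Fin 4 → ℝ, extDeriv' β₀ x * ω₀ x = 0) ∧
    (∀ x : Fin 4 → ℝ, ω₀ x * ω₀ x ≠ 0) := by
  refine ⟨extDeriv_ω, extDeriv_β, ?_, ?_, ?_⟩
  · intro x h
    rw [extDeriv_β] at h
    have hsq : ((dx 0 * dx 2 + dx 1 * dx 3 : FormAlgebra 4)) * (dx 0 * dx 2 + dx 1 * dx 3)
        = -(2 • (dx 0 * dx 1 * (dx 2 * dx 3))) := by
      rw [mul_add, add_mul, add_mul, quad_rep1, quad_rep4, Rpair 0 2 1 3,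
        Rswap12 0 1 2 3]
      rw [Rswap12]
      abel
    rw [h, zero_mul] at hsq
    apply tau_ne_zero
    have h3 := hsq.symm
    rw [neg_eq_zero] at h3
    exact (smul_eq_zero.mp (show (2:ℝ) • (dx 0 * dx 1 * (dx 2 * dx 3) : FormAlgebra 4) = 0 by
      rw [two_smul, ← two_nsmul]; exact h3)).resolve_left (by norm_num)
  · intro x
    rw [extDeriv_β]
    show _ * (Real.exp (x 0 * x 2 + x 1 * x 3) • (dx 0 * dx 1) + dx 2 * dx 3) = 0
    simp only [mul_add, add_mul, mul_smul_comm, quad_rep1, quad_rep2, quad_rep3, quad_rep4,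
      smul_zero, add_zero, zero_add]
  · intro x
    have hω : ω₀ x = Real.exp (x 0 * x 2 + x 1 * x 3) • ((dx 0 : FormAlgebra 4) * dx 1) + dx 2 * dx 3 := rfl
    rw [hω]
    set r := Real.exp (x 0 * x 2 + x 1 * x 3) with hr
    have hexp : (r • ((dx 0 : FormAlgebra 4) * dx 1) + dx 2 * dx 3) * (r • (dx 0 * dx 1) + dx 2 * dx 3)
        = (2 * r) • (dx 0 * dx 1 * (dx 2 * dx 3)) := by
      rw [mul_add, add_mul, add_mul, smul_mul_assoc, smul_mul_assoc, mul_smul_comm,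
        quad_rep1 0 1 1, mul_smul_comm, Rpair 0 1 2 3, quad_rep1 2 3 3]
      module
    rw [hexp]
    exact smul_ne_zero (by positivity) tau_ne_zero
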